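/- Let f : [0,R) → ℝ be continuously differentiable with f(0) = 0, f'(0) = −1, and f' strictly increasing. Then for every t in (0, ν), where ν := sup{t ∈ [0,R) : f'(t) < 0}, one has t − f(t)/f'(t) < 0. -/

import Mathlib

theorem stmt1 (R : ℝ) (hR : 0 < R) (f f' : ℝ → ℝ)
    (hderiv : ∀ t ∈ Set.Ico (0:ℝ) R, HasDerivWithinAt f (f' t) (Set.Ico 0 R) t)
    (hcont : ContinuousOn f' (Set.Ico 0 R))
    (hf0 : f 0 = 0) (hf'0 : f' 0 = -1)
    (hmono : StrictMonoOn f' (Set.Ico 0 R))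
    (ν : ℝ) (hν : ν = sSup {t ∈ Set.Ico 0 R | f' t < 0}) :
    ∀ t ∈ Set.Ioo 0 ν, t - f t / f' t < 0 := by
  intro t ht
  obtain ⟨ht0, htν⟩ := ht
  -- find s in the set with t < s
  have hbdd : BddAbove {t ∈ Set.Ico (0:ℝ) R | f' t < 0} := by
    refine ⟨R, fun x hx => le_of_lt hx.1.2⟩
  have hlt : t < sSup {t ∈ Set.Ico (0:ℝ) R | f' t < 0} := hν ▸ htν
  obtain ⟨s, hs, hts⟩ := exists_lt_of_lt_csSup (by
    refine ⟨0, ⟨⟨le_refl 0, hR⟩, by rw [hf'0]; norm_num⟩⟩) hlt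
  have hsR : s < R := hs.1.2
  have htR : t < R := lt_trans hts hsR
  have htmem : t ∈ Set.Ico (0:ℝ) R := ⟨le_of_lt ht0, htR⟩
  have hf't : f' t < 0 := lt_trans (hmono htmem hs.1 hts) hs.2
  -- continuity of f on Icc 0 t
  have hfc : ContinuousOn f (Set.Icc 0 t) := by
    intro x hx
    have hxm : x ∈ Set.Ico (0:ℝ) R := ⟨hx.1, lt_of_le_of_lt hx.2 htR⟩
    exact ((hderiv x hxm).continuousWithinAt).mono
      (fun y hy => ⟨hy.1, lt_of_le_of_lt hy.2 htR⟩)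
  -- derivative on Ioo 0 t
  have hfd : ∀ x ∈ Set.Ioo (0:ℝ) t, HasDerivAt f (f' x) x := by
    intro x hx
    have hxm : x ∈ Set.Ico (0:ℝ) R := ⟨le_of_lt hx.1, lt_trans hx.2 htR⟩
    refine (hderiv x hxm).hasDerivAt ?_
    have : Set.Ioo (0:ℝ) R ∈ nhds x :=
      Ioo_mem_nhds hx.1 (lt_trans hx.2 htR)
    exact Filter.mem_of_superset this Set.Ioo_subset_Ico_self
  obtain ⟨c, hc, hceq⟩ := exists_hasDerivAt_eq_slope f f' ht0 hfc hfd
  have hcm : c ∈ Set.Ico (0:ℝ) R := ⟨le_of_lt hc.1, lt_trans hc.2 htR⟩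
  have hfcv : f' c < f' t := hmono hcm htmem hc.2
  have hft : f t = f' c * t := by
    rw [hceq, hf0]
    field_simp
    ring
  have key : f t < t * f' t := by
    rw [hft]
    calc f' c * t < f' t * t := by exact mul_lt_mul_of_pos_right hfcv ht0
    _ = t * f' t := mul_comm _ _
  have : t < f t / f' t := (lt_div_iff_of_neg hf't).mpr key
  linarith
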